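/- Pair existence lemma: let Σ be a signature with a finite set of constants C, and Φ a finite set of closed formulas in the language of Σ with |C| > 2·cdepth(Φ) + 2·udepth(Φ). If p is a Cl_C(Φ)-maximal, consistent, fully witnessed pair and ◇φ ∈ p⁺, then there is a Cl_C(Φ)-maximal, consistent, fully witnessed pair q such that p R̂ q, φ ∈ q⁺, and mdepth(q⁺) < mdepth(p⁺). -/

import Mathlib

namespace QRC1

/-- Strictly positive formulas of QRC₁ over a signature with constants `Cst`,
relation symbols `Rl`, and arity function `ar`.  Terms are either variables
(natural numbers, left) or constants (right). -/
inductive Fml (Cst Rl : Type) (ar : Rl → ℕ) : Type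
  | top : Fml Cst Rl ar
  | rel (S : Rl) (ts : Fin (ar S) → ℕ ⊕ Cst) : Fml Cst Rl ar
  | and (φ ψ : Fml Cst Rl ar) : Fml Cst Rl ar
  | dia (φ : Fml Cst Rl ar) : Fml Cst Rl ar
  | all (x : ℕ) (φ : Fml Cst Rl ar) : Fml Cst Rl ar

namespace Fml

variable {Cst Rl : Type} {ar : Rl → ℕ}

/-- Free variables of a formula. -/
def fv : Fml Cst Rl ar → Set ℕ
  | .top => ∅
  | .rel _ ts => {x | ∃ i, ts i = Sum.inl x}
  | .and φ ψ => fv φ ∪ fv ψ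
  | .dia φ => fv φ
  | .all y φ => fv φ \ {y}

/-- A formula is closed when it has no free variables. -/
def Closed (φ : Fml Cst Rl ar) : Prop := φ.fv = ∅

/-- Constants occurring in a formula. -/
def consts : Fml Cst Rl ar → Set Cst
  | .top => ∅
  | .rel _ ts => {c | ∃ i, ts i = Sum.inr c}
  | .and φ ψ => consts φ ∪ consts ψ
  | .dia φ => consts φ
  | .all _ φ => consts φ

/-- Substitution of a term for a variable, on terms. -/
def substT (x : ℕ) (t : ℕ ⊕ Cst) : ℕ ⊕ Cst → ℕ ⊕ Cst
  | .inl y => if y = x then t else .inl y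
  | .inr c => .inr c

/-- `φ.subst x t` replaces all free occurrences of variable `x` in `φ` by the term `t`. -/
def subst : Fml Cst Rl ar → ℕ → (ℕ ⊕ Cst) → Fml Cst Rl ar
  | .top, _, _ => .top
  | .rel S ts, x, t => .rel S (fun i => substT x t (ts i))
  | .and φ ψ, x, t => .and (φ.subst x t) (ψ.subst x t)
  | .dia φ, x, t => .dia (φ.subst x t)
  | .all y φ, x, t => if y = x then .all y φ else .all y (φ.subst x t)

/-- `FreeFor t x φ`: the term `t` is free for the variable `x` in `φ`, i.e. no
free occurrence of a variable of `t` becomes bound in `φ[x/t]`. -/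
def FreeFor (t : ℕ ⊕ Cst) (x : ℕ) : Fml Cst Rl ar → Prop
  | .top => True
  | .rel _ _ => True
  | .and φ ψ => FreeFor t x φ ∧ FreeFor t x ψ
  | .dia φ => FreeFor t x φ
  | .all y φ => x ∉ fv (Fml.all y φ) ∨ (t ≠ .inl y ∧ FreeFor t x φ)

/-- Modal depth. -/
def mdepth : Fml Cst Rl ar → ℕ
  | .top => 0
  | .rel _ _ => 0
  | .and φ ψ => max φ.mdepth ψ.mdepth
  | .dia φ => φ.mdepth + 1
  | .all _ φ => φ.mdepth

/-- Quantifier depth. -/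
def udepth : Fml Cst Rl ar → ℕ
  | .top => 0
  | .rel _ _ => 0
  | .and φ ψ => max φ.udepth ψ.udepth
  | .dia φ => φ.udepth
  | .all _ φ => φ.udepth + 1

/-- Number of distinct constants occurring in a formula. -/
noncomputable def cdepth (φ : Fml Cst Rl ar) : ℕ := φ.consts.ncard

/-- Size of a formula (for termination purposes). -/
def size : Fml Cst Rl ar → ℕ
  | .top => 1
  | .rel _ _ => 1
  | .and φ ψ => φ.size + ψ.size + 1
  | .dia φ => φ.size + 1
  | .all _ φ => φ.size + 1

theorem size_subst (φ : Fml Cst Rl ar) (x : ℕ) (t : ℕ ⊕ Cst) :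
    (φ.subst x t).size = φ.size := by
  induction φ generalizing x t with
  | top => rfl
  | rel S ts => rfl
  | and φ ψ ihφ ihψ => simp [subst, size, ihφ, ihψ]
  | dia φ ih => simp [subst, size, ih]
  | all y φ ih => by_cases h : y = x <;> simp [subst, h, size, ih]

/-- The closure of a formula under a set of constants `C`, where the
subformulas of `∀x φ` are all `φ[x/c]` for `c ∈ C`. -/
def cl (C : Set Cst) : Fml Cst Rl ar → Set (Fml Cst Rl ar)
  | .top => {.top}
  | .rel S ts => {.rel S ts, .top}
  | .and φ ψ => {.and φ ψ} ∪ φ.cl C ∪ ψ.cl C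
  | .dia φ => {.dia φ} ∪ φ.cl C
  | .all x φ => {.all x φ} ∪ ⋃ c ∈ C, (φ.subst x (.inr c)).cl C
termination_by φ => φ.size
decreasing_by all_goals (simp [size, size_subst]; try omega)

/-- Renaming of constants along a map `f` (used for signature extensions). -/
def mapC {Cst' : Type} (f : Cst → Cst') : Fml Cst Rl ar → Fml Cst' Rl ar
  | .top => .top
  | .rel S ts => .rel S (fun i => Sum.map id f (ts i))
  | .and φ ψ => .and (φ.mapC f) (ψ.mapC f)
  | .dia φ => .dia (φ.mapC f)
  | .all x φ => .all x (φ.mapC f)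

/-- Simultaneous substitution of terms for variables. -/
def msubst (σ : ℕ → ℕ ⊕ Cst) : Fml Cst Rl ar → Fml Cst Rl ar
  | .top => .top
  | .rel S ts => .rel S (fun i => match ts i with
      | .inl x => σ x
      | .inr c => .inr c)
  | .and φ ψ => .and (φ.msubst σ) (ψ.msubst σ)
  | .dia φ => .dia (φ.msubst σ)
  | .all x φ => .all x (φ.msubst (Function.update σ x (.inl x)))

/-- `φ^g`: replace every free variable `x` of `φ` by the constant `g x`. -/
def capp (g : ℕ → Cst) (φ : Fml Cst Rl ar) : Fml Cst Rl ar :=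
  φ.msubst (fun x => .inr (g x))

end Fml

/-- The derivability relation `φ ⊢ ψ` of the calculus QRC₁. -/
inductive Der {Cst Rl : Type} {ar : Rl → ℕ} : Fml Cst Rl ar → Fml Cst Rl ar → Prop
  | top (φ) : Der φ .top
  | refl (φ) : Der φ φ
  | andE1 (φ ψ) : Der (.and φ ψ) φ
  | andE2 (φ ψ) : Der (.and φ ψ) ψ
  | andI {φ ψ χ} : Der φ ψ → Der φ χ → Der φ (.and ψ χ)
  | cut {φ ψ χ} : Der φ ψ → Der ψ χ → Der φ χ
  | diaMono {φ ψ} : Der φ ψ → Der (.dia φ) (.dia ψ)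
  | diaTrans (φ) : Der (.dia (.dia φ)) (.dia φ)
  | allI {φ ψ} (x) : Der φ ψ → x ∉ φ.fv → Der φ (.all x ψ)
  | allE {φ ψ} (x) (t : ℕ ⊕ Cst) : Der (φ.subst x t) ψ → Fml.FreeFor t x φ →
      Der (.all x φ) ψ
  | inst {φ ψ} (x) (t : ℕ ⊕ Cst) : Der φ ψ → Fml.FreeFor t x φ → Fml.FreeFor t x ψ →
      Der (φ.subst x t) (ψ.subst x t)
  | genC {φ ψ} (x) (c : Cst) : Der (φ.subst x (.inr c)) (ψ.subst x (.inr c)) →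
      c ∉ φ.consts → c ∉ ψ.consts → Der φ ψ

section Depths

variable {Cst Rl : Type} {ar : Rl → ℕ}

/-- Modal depth of a set of formulas (the supremum of the modal depths). -/
noncomputable def mdepthSet (Γ : Set (Fml Cst Rl ar)) : ℕ := sSup (Fml.mdepth '' Γ)

/-- Quantifier depth of a set of formulas. -/
noncomputable def udepthSet (Γ : Set (Fml Cst Rl ar)) : ℕ := sSup (Fml.udepth '' Γ)

/-- Maximum number of distinct constants per formula in a set of formulas. -/
noncomputable def cdepthSet (Γ : Set (Fml Cst Rl ar)) : ℕ := sSup (Fml.cdepth '' Γ)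

/-- Closure of a set of formulas under a set of constants. -/
def clSet (C : Set Cst) (Γ : Set (Fml Cst Rl ar)) : Set (Fml Cst Rl ar) :=
  ⋃ γ ∈ Γ, γ.cl C

/-- Conjunction of a finite list of formulas. -/
def conjList : List (Fml Cst Rl ar) → Fml Cst Rl ar
  | [] => .top
  | φ :: L => .and φ (conjList L)

end Depths

/-- A pair `⟨p⁺, p⁻⟩` of sets of formulas. -/
structure Pair (Cst Rl : Type) (ar : Rl → ℕ) where
  pos : Set (Fml Cst Rl ar)
  neg : Set (Fml Cst Rl ar)

namespace Pair

variable {Cst Rl : Type} {ar : Rl → ℕ}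

/-- All formulas of the pair are closed. -/
def ClosedP (p : Pair Cst Rl ar) : Prop := ∀ φ ∈ p.pos ∪ p.neg, φ.Closed

/-- Consistency: the conjunction of (finitely many formulas of) `p⁺` does not
derive any formula of `p⁻`. -/
def Consistent (p : Pair Cst Rl ar) : Prop :=
  ∀ δ ∈ p.neg, ∀ L : List (Fml Cst Rl ar), (∀ χ ∈ L, χ ∈ p.pos) → ¬ Der (conjList L) δ

/-- `Φ`-maximality: every formula of `Φ` is in `p⁺` or in `p⁻`, and `p`
contains only formulas of `Φ`. -/
def MaximalIn (Φ : Set (Fml Cst Rl ar)) (p : Pair Cst Rl ar) : Prop :=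
  (∀ χ ∈ Φ, χ ∈ p.pos ∨ χ ∈ p.neg) ∧ p.pos ∪ p.neg ⊆ Φ

/-- Fully witnessed: every negative universal has a constant witness. -/
def FullyWitnessed (p : Pair Cst Rl ar) : Prop :=
  ∀ (x : ℕ) (φ : Fml Cst Rl ar), Fml.all x φ ∈ p.neg →
    ∃ c : Cst, φ.subst x (.inr c) ∈ p.neg

/-- `Φ`-maximal, consistent, fully witnessed (and closed) pair. -/
def MCW (Φ : Set (Fml Cst Rl ar)) (p : Pair Cst Rl ar) : Prop :=
  p.ClosedP ∧ p.MaximalIn Φ ∧ p.Consistent ∧ p.FullyWitnessed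

end Pair

/-- The relation `R̂` between pairs. -/
def hatR {Cst Rl : Type} {ar : Rl → ℕ} (p q : Pair Cst Rl ar) : Prop :=
  (∀ φ : Fml Cst Rl ar, Fml.dia φ ∈ p.neg → φ ∈ q.neg ∧ Fml.dia φ ∈ q.neg) ∧
  ∃ ψ : Fml Cst Rl ar, Fml.dia ψ ∈ p.pos ∧ Fml.dia ψ ∈ q.neg

/-- A relational model for QRC₁. -/
structure Model (Cst Rl : Type) (ar : Rl → ℕ) where
  W : Type
  R : W → W → Prop
  Dom : W → Type
  finDom : ∀ w, Finite (Dom w)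
  η : ∀ w v, R w v → Dom w → Dom v
  I : ∀ w, Cst → Dom w
  J : ∀ w (S : Rl), Set (Fin (ar S) → Dom w)

namespace Model

variable {Cst Rl : Type} {ar : Rl → ℕ} (M : Model Cst Rl ar)

/-- Value of a term under a `w`-assignment. -/
def tval {w : M.W} (g : ℕ → M.Dom w) : ℕ ⊕ Cst → M.Dom w
  | .inl x => g x
  | .inr c => M.I w c

/-- Kripke satisfaction `M, w ⊩^g φ`. -/
def Sat : (w : M.W) → (g : ℕ → M.Dom w) → Fml Cst Rl ar → Prop
  | _, _, .top => True
  | w, g, .rel S ts => (fun i => M.tval g (ts i)) ∈ M.J w S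
  | w, g, .and φ ψ => Sat w g φ ∧ Sat w g ψ
  | w, g, .dia φ => ∃ (v : M.W) (h : M.R w v), Sat v (fun n => M.η w v h (g n)) φ
  | w, g, .all x φ => ∀ h : ℕ → M.Dom w, (∀ y, y ≠ x → h y = g y) → Sat w h φ

/-- Adequate models: transitive accessibility, transitive `η` functions, and
concordant interpretation of constants. -/
structure Adequate : Prop where
  trans : Transitive M.R
  etaTrans : ∀ {w u v : M.W} (h1 : M.R w u) (h2 : M.R u v) (h3 : M.R w v),
    M.η w v h3 = M.η u v h2 ∘ M.η w u h1
  concord : ∀ {w u : M.W} (h : M.R w u) (c : Cst), M.I u c = M.η w u h (M.I w c)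

/-- Constant domain: all worlds have the same domain. -/
def ConstantDomain : Prop := ∀ w v : M.W, M.Dom w = M.Dom v

end Model


section AuxLemmas

variable {Cst Rl : Type} {ar : Rl → ℕ}

theorem fv_subst_inr (φ : Fml Cst Rl ar) (x : ℕ) (c : Cst) :
    (φ.subst x (.inr c)).fv = φ.fv \ {x} := by
  induction φ generalizing x with
  | top => simp [Fml.subst, Fml.fv]
  | rel S ts =>
      ext y
      simp only [Fml.subst, Fml.fv, Set.mem_setOf_eq, Set.mem_diff, Set.mem_singleton_iff]
      constructor
      · rintro ⟨i, hi⟩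
        cases h : ts i with
        | inl z =>
            rw [h] at hi
            by_cases hz : z = x
            · simp [Fml.substT, hz] at hi
            · simp only [Fml.substT, if_neg hz, Sum.inl.injEq] at hi
              subst hi
              exact ⟨⟨i, h⟩, hz⟩
        | inr d => rw [h] at hi; simp [Fml.substT] at hi
      · rintro ⟨⟨i, hi⟩, hy⟩
        refine ⟨i, ?_⟩
        rw [hi]
        simp [Fml.substT, hy]
  | and φ ψ ihφ ihψ =>
      simp only [Fml.subst, Fml.fv, ihφ, ihψ]
      ext z; simp; tauto
  | dia φ ih => simp [Fml.subst, Fml.fv, ih]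
  | all y φ ih =>
      by_cases h : y = x
      · subst h
        simp only [Fml.subst, if_pos rfl, Fml.fv]
        ext z; simp [Fml.fv]; try tauto
      · simp only [Fml.subst, if_neg h, Fml.fv, ih]
        ext z; simp; tauto

theorem subst_eq_of_not_mem_fv {φ : Fml Cst Rl ar} {x : ℕ} (t : ℕ ⊕ Cst)
    (h : x ∉ φ.fv) : φ.subst x t = φ := by
  induction φ generalizing x with
  | top => rfl
  | rel S ts =>
      simp only [Fml.subst, Fml.rel.injEq, heq_eq_eq, true_and]
      funext i
      cases hts : ts i with
      | inl z =>
          have hz : z ≠ x := by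
            rintro rfl
            exact h ⟨i, hts⟩
          simp [Fml.substT, hz]
      | inr d => simp [Fml.substT]
  | and φ ψ ihφ ihψ =>
      simp only [Fml.fv, Set.mem_union] at h
      push_neg at h
      simp [Fml.subst, ihφ h.1, ihψ h.2]
  | dia φ ih =>
      simp only [Fml.fv] at h
      simp [Fml.subst, ih h]
  | all y φ ih =>
      by_cases hyx : y = x
      · simp [Fml.subst, hyx]
      · have : x ∉ φ.fv := by
          simp only [Fml.fv, Set.mem_diff, Set.mem_singleton_iff] at h
          tauto
        simp [Fml.subst, hyx, ih this]

theorem mdepth_subst (φ : Fml Cst Rl ar) (x : ℕ) (t : ℕ ⊕ Cst) :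
    (φ.subst x t).mdepth = φ.mdepth := by
  induction φ generalizing x t with
  | top => rfl
  | rel S ts => rfl
  | and φ ψ ihφ ihψ => simp [Fml.subst, Fml.mdepth, ihφ, ihψ]
  | dia φ ih => simp [Fml.subst, Fml.mdepth, ih]
  | all y φ ih => by_cases h : y = x <;> simp [Fml.subst, h, Fml.mdepth, ih]

theorem udepth_subst (φ : Fml Cst Rl ar) (x : ℕ) (t : ℕ ⊕ Cst) :
    (φ.subst x t).udepth = φ.udepth := by
  induction φ generalizing x t with
  | top => rfl
  | rel S ts => rfl
  | and φ ψ ihφ ihψ => simp [Fml.subst, Fml.udepth, ihφ, ihψ]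
  | dia φ ih => simp [Fml.subst, Fml.udepth, ih]
  | all y φ ih => by_cases h : y = x <;> simp [Fml.subst, h, Fml.udepth, ih]

theorem consts_subst_subset (φ : Fml Cst Rl ar) (x : ℕ) (c : Cst) :
    (φ.subst x (.inr c)).consts ⊆ φ.consts ∪ {c} := by
  induction φ generalizing x with
  | top => simp [Fml.subst, Fml.consts]
  | rel S ts =>
      intro d hd
      obtain ⟨i, hi⟩ := hd
      replace hi : Fml.substT x (Sum.inr c) (ts i) = Sum.inr d := hi
      cases hts : ts i with
      | inl z =>
          rw [hts] at hi
          by_cases hz : z = x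
          · simp only [Fml.substT, if_pos hz, Sum.inr.injEq] at hi
            subst hi; right; rfl
          · simp [Fml.substT, hz] at hi
      | inr e =>
          rw [hts] at hi
          simp only [Fml.substT, Sum.inr.injEq] at hi
          subst hi
          exact Or.inl ⟨i, hts⟩
  | and φ ψ ihφ ihψ =>
      intro d hd
      rcases hd with hd | hd
      · rcases ihφ x hd with h | h
        · exact Or.inl (Or.inl h)
        · exact Or.inr h
      · rcases ihψ x hd with h | h
        · exact Or.inl (Or.inr h)
        · exact Or.inr h
  | dia φ ih => exact ih x
  | all y φ ih =>
      by_cases h : y = x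
      · simp [Fml.subst, h, Fml.consts]
      · simpa [Fml.subst, h, Fml.consts] using ih x

end AuxLemmas
section AuxLemmas2

variable {Cst Rl : Type} {ar : Rl → ℕ}

theorem mdepth_der {φ ψ : Fml Cst Rl ar} (h : Der φ ψ) : ψ.mdepth ≤ φ.mdepth := by
  induction h with
  | top => exact Nat.zero_le _
  | refl => exact le_refl _
  | andE1 φ ψ => exact le_max_left _ _
  | andE2 φ ψ => exact le_max_right _ _
  | andI h1 h2 ih1 ih2 => exact max_le ih1 ih2
  | cut h1 h2 ih1 ih2 => exact le_trans ih2 ih1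
  | diaMono h ih => exact Nat.succ_le_succ ih
  | diaTrans φ => simp [Fml.mdepth]
  | allI x h hx ih => exact ih
  | allE x t h hf ih => simpa [Fml.mdepth, mdepth_subst] using ih
  | inst x t h h1 h2 ih => simpa [mdepth_subst] using ih
  | genC x c h h1 h2 ih => simpa [mdepth_subst] using ih

theorem der_conjList {φ : Fml Cst Rl ar} {L : List (Fml Cst Rl ar)}
    (h : ∀ χ ∈ L, Der φ χ) : Der φ (conjList L) := by
  induction L with
  | nil => exact Der.top φ
  | cons ψ L ih =>
      exact Der.andI (h ψ (by simp)) (ih (fun χ hχ => h χ (by simp [hχ])))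

theorem cl_self {C : Set Cst} (φ : Fml Cst Rl ar) : φ ∈ φ.cl C := by
  cases φ <;> simp [Fml.cl]

theorem mem_cl_dia {C : Set Cst} {φ ψ : Fml Cst Rl ar} (h : ψ ∈ φ.cl C) :
    ψ ∈ (Fml.dia φ).cl C := by
  simp [Fml.cl, h]

theorem mem_cl_all {C : Set Cst} {φ : Fml Cst Rl ar} {x : ℕ} {c : Cst} (hc : c ∈ C) :
    φ.subst x (.inr c) ∈ (Fml.all x φ).cl C := by
  simp only [Fml.cl, Set.mem_union, Set.mem_iUnion]
  exact Or.inr ⟨c, hc, cl_self _⟩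

/-- Transitivity of the closure, by strong induction on size. -/
theorem cl_trans_aux {C : Set Cst} :
    ∀ (n : ℕ) (γ : Fml Cst Rl ar), γ.size ≤ n → ∀ χ ∈ γ.cl C, χ.cl C ⊆ γ.cl C := by
  intro n
  induction n with
  | zero => intro γ hγ; cases γ <;> simp [Fml.size] at hγ
  | succ n ih =>
      intro γ hγ χ hχ
      cases γ with
      | top =>
          simp only [Fml.cl, Set.mem_singleton_iff] at hχ
          subst hχ; exact subset_refl _
      | rel S ts =>
          simp only [Fml.cl, Set.mem_insert_iff, Set.mem_singleton_iff] at hχ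
          rcases hχ with rfl | rfl
          · exact subset_refl _
          · intro χ' hχ'
            simp only [Fml.cl, Set.mem_singleton_iff] at hχ'
            subst hχ'; simp [Fml.cl]
      | and φ ψ =>
          simp only [Fml.size] at hγ
          simp only [Fml.cl, Set.mem_union, Set.mem_singleton_iff] at hχ
          rcases hχ with (rfl | h) | h
          · exact subset_refl _
          · intro a ha
            simp only [Fml.cl, Set.mem_union]
            exact Or.inl (Or.inr (ih φ (by omega) χ h ha))
          · intro a ha
            simp only [Fml.cl, Set.mem_union]
            exact Or.inr (ih ψ (by omega) χ h ha)
      | dia φ =>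
          simp only [Fml.size] at hγ
          simp only [Fml.cl, Set.mem_union, Set.mem_singleton_iff] at hχ
          rcases hχ with rfl | h
          · exact subset_refl _
          · intro a ha
            simp only [Fml.cl, Set.mem_union]
            exact Or.inr (ih φ (by omega) χ h ha)
      | all x φ =>
          simp only [Fml.size] at hγ
          simp only [Fml.cl, Set.mem_union, Set.mem_singleton_iff, Set.mem_iUnion] at hχ
          rcases hχ with rfl | ⟨c, hc, h⟩
          · exact subset_refl _
          · refine subset_trans (ih (φ.subst x (.inr c)) ?_ χ h) ?_
            · rw [Fml.size_subst]; omega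
            · intro χ' hχ'
              simp only [Fml.cl, Set.mem_union, Set.mem_iUnion]
              exact Or.inr ⟨c, hc, hχ'⟩

theorem cl_trans {C : Set Cst} {γ χ : Fml Cst Rl ar} (h : χ ∈ γ.cl C) :
    χ.cl C ⊆ γ.cl C :=
  cl_trans_aux γ.size γ (le_refl _) χ h

/-- Formulas in the closure of a closed formula are closed. -/
theorem cl_closed_aux {C : Set Cst} :
    ∀ (n : ℕ) (γ : Fml Cst Rl ar), γ.size ≤ n → γ.Closed → ∀ χ ∈ γ.cl C, χ.Closed := by
  intro n
  induction n with
  | zero => intro γ hγ; cases γ <;> simp [Fml.size] at hγ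
  | succ n ih =>
      intro γ hγ hcl χ hχ
      cases γ with
      | top =>
          simp only [Fml.cl, Set.mem_singleton_iff] at hχ
          subst hχ; exact hcl
      | rel S ts =>
          simp only [Fml.cl, Set.mem_insert_iff, Set.mem_singleton_iff] at hχ
          rcases hχ with rfl | rfl
          · exact hcl
          · simp [Fml.Closed, Fml.fv]
      | and φ ψ =>
          simp only [Fml.size] at hγ
          have h1 : φ.Closed ∧ ψ.Closed := by
            simp only [Fml.Closed, Fml.fv, Set.union_empty_iff] at hcl ⊢
            exact hcl
          simp only [Fml.cl, Set.mem_union, Set.mem_singleton_iff] at hχ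
          rcases hχ with (rfl | h) | h
          · exact hcl
          · exact ih φ (by omega) h1.1 χ h
          · exact ih ψ (by omega) h1.2 χ h
      | dia φ =>
          simp only [Fml.size] at hγ
          simp only [Fml.cl, Set.mem_union, Set.mem_singleton_iff] at hχ
          rcases hχ with rfl | h
          · exact hcl
          · exact ih φ (by omega) hcl χ h
      | all x φ =>
          simp only [Fml.size] at hγ
          simp only [Fml.cl, Set.mem_union, Set.mem_singleton_iff, Set.mem_iUnion] at hχ
          rcases hχ with rfl | ⟨c, hc, h⟩
          · exact hcl
          · refine ih (φ.subst x (.inr c)) (by rw [Fml.size_subst]; omega) ?_ χ h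
            simp only [Fml.Closed, fv_subst_inr]
            simpa [Fml.Closed, Fml.fv] using hcl

theorem cl_closed {C : Set Cst} {γ χ : Fml Cst Rl ar} (hγ : γ.Closed) (h : χ ∈ γ.cl C) :
    χ.Closed :=
  cl_closed_aux γ.size γ (le_refl _) hγ χ h

/-- mdepth does not increase in the closure. -/
theorem cl_mdepth_aux {C : Set Cst} :
    ∀ (n : ℕ) (γ : Fml Cst Rl ar), γ.size ≤ n → ∀ χ ∈ γ.cl C, χ.mdepth ≤ γ.mdepth := by
  intro n
  induction n with
  | zero => intro γ hγ; cases γ <;> simp [Fml.size] at hγ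
  | succ n ih =>
      intro γ hγ χ hχ
      cases γ with
      | top =>
          simp only [Fml.cl, Set.mem_singleton_iff] at hχ
          subst hχ; exact le_refl _
      | rel S ts =>
          simp only [Fml.cl, Set.mem_insert_iff, Set.mem_singleton_iff] at hχ
          rcases hχ with rfl | rfl
          · exact le_refl _
          · exact Nat.zero_le _
      | and φ ψ =>
          simp only [Fml.size] at hγ
          simp only [Fml.cl, Set.mem_union, Set.mem_singleton_iff] at hχ
          rcases hχ with (rfl | h) | h
          · exact le_refl _
          · exact le_trans (ih φ (by omega) χ h) (le_max_left _ _)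
          · exact le_trans (ih ψ (by omega) χ h) (le_max_right _ _)
      | dia φ =>
          simp only [Fml.size] at hγ
          simp only [Fml.cl, Set.mem_union, Set.mem_singleton_iff] at hχ
          rcases hχ with rfl | h
          · exact le_refl _
          · exact le_trans (ih φ (by omega) χ h) (Nat.le_succ _)
      | all x φ =>
          simp only [Fml.size] at hγ
          simp only [Fml.cl, Set.mem_union, Set.mem_singleton_iff, Set.mem_iUnion] at hχ
          rcases hχ with rfl | ⟨c, hc, h⟩
          · exact le_refl _
          · have := ih (φ.subst x (.inr c)) (by rw [Fml.size_subst]; omega) χ h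
            simpa [mdepth_subst, Fml.mdepth] using this

theorem cl_mdepth {C : Set Cst} {γ χ : Fml Cst Rl ar} (h : χ ∈ γ.cl C) :
    χ.mdepth ≤ γ.mdepth :=
  cl_mdepth_aux γ.size γ (le_refl _) χ h

end AuxLemmas2
section AuxLemmas3

variable {Cst Rl : Type} {ar : Rl → ℕ} [Finite Cst]

theorem cdepth_mono {φ ψ : Fml Cst Rl ar} (h : φ.consts ⊆ ψ.consts) :
    φ.cdepth ≤ ψ.cdepth :=
  Set.ncard_le_ncard h (Set.toFinite _)

theorem cdepth_subst_le (φ : Fml Cst Rl ar) (x : ℕ) (c : Cst) :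
    (φ.subst x (.inr c)).cdepth ≤ φ.cdepth + 1 := by
  calc (φ.subst x (.inr c)).cdepth
      ≤ (φ.consts ∪ {c}).ncard :=
        Set.ncard_le_ncard (consts_subst_subset φ x c) (Set.toFinite _)
    _ ≤ φ.consts.ncard + ({c} : Set Cst).ncard := Set.ncard_union_le _ _
    _ = φ.cdepth + 1 := by rw [Set.ncard_singleton]; rfl

/-- cdepth + udepth does not increase in the closure. -/
theorem cl_depth_aux {C : Set Cst} :
    ∀ (n : ℕ) (γ : Fml Cst Rl ar), γ.size ≤ n → ∀ χ ∈ γ.cl C,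
      χ.cdepth + χ.udepth ≤ γ.cdepth + γ.udepth := by
  intro n
  induction n with
  | zero => intro γ hγ; cases γ <;> simp [Fml.size] at hγ
  | succ n ih =>
      intro γ hγ χ hχ
      cases γ with
      | top =>
          simp only [Fml.cl, Set.mem_singleton_iff] at hχ
          subst hχ; exact le_refl _
      | rel S ts =>
          simp only [Fml.cl, Set.mem_insert_iff, Set.mem_singleton_iff] at hχ
          rcases hχ with rfl | rfl
          · exact le_refl _
          · simp [Fml.cdepth, Fml.udepth, Fml.consts]
      | and φ ψ =>
          simp only [Fml.size] at hγ
          simp only [Fml.cl, Set.mem_union, Set.mem_singleton_iff] at hχ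
          rcases hχ with (rfl | h) | h
          · exact le_refl _
          · refine le_trans (ih φ (by omega) χ h) ?_
            have h1 : φ.cdepth ≤ (Fml.and φ ψ).cdepth :=
              cdepth_mono (by simp [Fml.consts])
            have h2 : φ.udepth ≤ (Fml.and φ ψ).udepth := le_max_left _ _
            omega
          · refine le_trans (ih ψ (by omega) χ h) ?_
            have h1 : ψ.cdepth ≤ (Fml.and φ ψ).cdepth :=
              cdepth_mono (by simp [Fml.consts])
            have h2 : ψ.udepth ≤ (Fml.and φ ψ).udepth := le_max_right _ _
            omega
      | dia φ =>
          simp only [Fml.size] at hγ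
          simp only [Fml.cl, Set.mem_union, Set.mem_singleton_iff] at hχ
          rcases hχ with rfl | h
          · exact le_refl _
          · refine le_trans (ih φ (by omega) χ h) ?_
            have h1 : φ.cdepth = (Fml.dia φ).cdepth := rfl
            have h2 : φ.udepth = (Fml.dia φ).udepth := rfl
            omega
      | all x φ =>
          simp only [Fml.size] at hγ
          simp only [Fml.cl, Set.mem_union, Set.mem_singleton_iff, Set.mem_iUnion] at hχ
          rcases hχ with rfl | ⟨c, hc, h⟩
          · exact le_refl _
          · refine le_trans (ih (φ.subst x (.inr c)) (by rw [Fml.size_subst]; omega) χ h) ?_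
            have h1 : (φ.subst x (.inr c)).cdepth ≤ φ.cdepth + 1 := cdepth_subst_le φ x c
            have h2 : (φ.subst x (.inr c)).udepth = φ.udepth := udepth_subst φ x _
            have h3 : (Fml.all x φ).cdepth = φ.cdepth := rfl
            have h4 : (Fml.all x φ).udepth = φ.udepth + 1 := rfl
            omega

theorem cl_depth {C : Set Cst} {γ χ : Fml Cst Rl ar} (h : χ ∈ γ.cl C) :
    χ.cdepth + χ.udepth ≤ γ.cdepth + γ.udepth :=
  cl_depth_aux γ.size γ (le_refl _) χ h

end AuxLemmas3
theorem pair_existence (Cst Rl : Type) (ar : Rl → ℕ) [Finite Cst]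
    (Φ : Set (Fml Cst Rl ar)) (hΦfin : Φ.Finite) (hΦcl : ∀ φ ∈ Φ, φ.Closed)
    (hcard : 2 * cdepthSet Φ + 2 * udepthSet Φ < Nat.card Cst)
    (p : Pair Cst Rl ar) (hp : p.MCW (clSet Set.univ Φ))
    (φ : Fml Cst Rl ar) (hφ : Fml.dia φ ∈ p.pos) :
    ∃ q : Pair Cst Rl ar, q.MCW (clSet Set.univ Φ) ∧ hatR p q ∧ φ ∈ q.pos ∧
      mdepthSet q.pos < mdepthSet p.pos := by
  classical
  obtain ⟨hpC, hpMax, hpCons, hpWit⟩ := hp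
  have memΨ : ∀ {χ : Fml Cst Rl ar},
      χ ∈ clSet (Set.univ : Set Cst) Φ ↔ ∃ γ ∈ Φ, χ ∈ γ.cl Set.univ := by
    intro χ; simp [clSet]
  have hΨclosed : ∀ χ ∈ clSet (Set.univ : Set Cst) Φ, χ.Closed := by
    intro χ hχ; obtain ⟨γ, hγ, h⟩ := memΨ.mp hχ; exact cl_closed (hΦcl γ hγ) h
  have hΨtrans : ∀ {χ δ : Fml Cst Rl ar}, χ ∈ clSet (Set.univ : Set Cst) Φ →
      δ ∈ χ.cl Set.univ → δ ∈ clSet (Set.univ : Set Cst) Φ := by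
    intro χ δ hχ hδ; obtain ⟨γ, hγ, h⟩ := memΨ.mp hχ
    exact memΨ.mpr ⟨γ, hγ, cl_trans h hδ⟩
  have hdia : Fml.dia φ ∈ clSet (Set.univ : Set Cst) Φ := hpMax.2 (Or.inl hφ)
  have hφΨ : φ ∈ clSet (Set.univ : Set Cst) Φ := hΨtrans hdia (mem_cl_dia (cl_self φ))
  have hΨdepth : ∀ χ ∈ clSet (Set.univ : Set Cst) Φ,
      χ.cdepth ≤ cdepthSet Φ + udepthSet Φ := by
    intro χ hχ
    obtain ⟨γ, hγ, h⟩ := memΨ.mp hχ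
    have h1 := cl_depth h
    have h2 : γ.cdepth ≤ cdepthSet Φ :=
      le_csSup (Set.Finite.bddAbove (hΦfin.image _)) ⟨γ, hγ, rfl⟩
    have h3 : γ.udepth ≤ udepthSet Φ :=
      le_csSup (Set.Finite.bddAbove (hΦfin.image _)) ⟨γ, hγ, rfl⟩
    omega
  have hΨmd : ∀ χ ∈ clSet (Set.univ : Set Cst) Φ, χ.mdepth ≤ sSup (Fml.mdepth '' Φ) := by
    intro χ hχ; obtain ⟨γ, hγ, h⟩ := memΨ.mp hχ
    exact le_trans (cl_mdepth h)
      (le_csSup (Set.Finite.bddAbove (hΦfin.image _)) ⟨γ, hγ, rfl⟩)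
  refine ⟨⟨{χ | χ ∈ clSet (Set.univ : Set Cst) Φ ∧ Der φ χ},
           {χ | χ ∈ clSet (Set.univ : Set Cst) Φ ∧ ¬ Der φ χ}⟩, ⟨?_, ?_, ?_, ?_⟩, ?_, ?_, ?_⟩
  · -- ClosedP
    intro χ hχ
    rcases hχ with hχ | hχ <;> exact hΨclosed χ hχ.1
  · -- MaximalIn
    constructor
    · intro χ hχ
      by_cases h : Der φ χ
      · exact Or.inl ⟨hχ, h⟩
      · exact Or.inr ⟨hχ, h⟩
    · intro χ hχ
      rcases hχ with hχ | hχ <;> exact hχ.1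
  · -- Consistent
    intro δ hδ L hL hder
    exact hδ.2 (Der.cut (der_conjList fun χ hχ => (hL χ hχ).2) hder)
  · -- FullyWitnessed
    intro x ψ hall
    by_contra hcon
    push_neg at hcon
    have hallΨ : Fml.all x ψ ∈ clSet (Set.univ : Set Cst) Φ := hall.1
    have hnotder : ¬ Der φ (.all x ψ) := hall.2
    have hinst : ∀ c : Cst, Der φ (ψ.subst x (.inr c)) := by
      intro c
      have hmem : ψ.subst x (.inr c) ∈ clSet (Set.univ : Set Cst) Φ :=
        hΨtrans hallΨ (mem_cl_all (Set.mem_univ c))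
      by_contra hd
      exact hcon c ⟨hmem, hd⟩
    have hφd : φ.cdepth ≤ cdepthSet Φ + udepthSet Φ := hΨdepth φ hφΨ
    have hψd : ψ.cdepth ≤ cdepthSet Φ + udepthSet Φ := by
      have := hΨdepth _ hallΨ
      simpa [Fml.cdepth, Fml.consts] using this
    have hfresh : ∃ c : Cst, c ∉ φ.consts ∪ ψ.consts := by
      by_contra hall2
      push_neg at hall2
      have huniv : φ.consts ∪ ψ.consts = Set.univ :=
        Set.eq_univ_of_forall hall2
      have hle : (φ.consts ∪ ψ.consts).ncard ≤ φ.consts.ncard + ψ.consts.ncard :=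
        Set.ncard_union_le _ _
      rw [huniv, Set.ncard_univ] at hle
      have : φ.consts.ncard ≤ cdepthSet Φ + udepthSet Φ := hφd
      have : ψ.consts.ncard ≤ cdepthSet Φ + udepthSet Φ := hψd
      omega
    obtain ⟨c, hc⟩ := hfresh
    have hφclosed : φ.Closed := hΨclosed φ hφΨ
    have hxfv : x ∉ φ.fv := by rw [hφclosed]; exact Set.notMem_empty x
    have h1 : φ.subst x (.inr c) = φ := subst_eq_of_not_mem_fv _ hxfv
    have hder : Der (φ.subst x (.inr c)) (ψ.subst x (.inr c)) := by
      rw [h1]; exact hinst c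
    have h2 : Der φ ψ :=
      Der.genC x c hder (fun h => hc (Or.inl h)) (fun h => hc (Or.inr h))
    exact hnotder (Der.allI x h2 hxfv)
  · -- hatR
    constructor
    · intro δ hδ
      have hdδ : Fml.dia δ ∈ clSet (Set.univ : Set Cst) Φ := hpMax.2 (Or.inr hδ)
      have hδΨ : δ ∈ clSet (Set.univ : Set Cst) Φ := hΨtrans hdδ (mem_cl_dia (cl_self δ))
      constructor
      · refine ⟨hδΨ, fun h => ?_⟩
        exact hpCons (Fml.dia δ) hδ [Fml.dia φ] (by simpa using hφ)
          (Der.cut (Der.andE1 _ _) (Der.diaMono h))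
      · refine ⟨hdδ, fun h => ?_⟩
        exact hpCons (Fml.dia δ) hδ [Fml.dia φ] (by simpa using hφ)
          (Der.cut (Der.andE1 _ _) (Der.cut (Der.diaMono h) (Der.diaTrans δ)))
    · refine ⟨φ, hφ, hdia, fun h => ?_⟩
      have := mdepth_der h
      simp [Fml.mdepth] at this
  · -- φ ∈ q.pos
    exact ⟨hφΨ, Der.refl φ⟩
  · -- mdepth decreases
    have hbdd : BddAbove (Fml.mdepth '' p.pos) := by
      refine ⟨sSup (Fml.mdepth '' Φ), ?_⟩
      rintro a ⟨χ, hχ, rfl⟩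
      exact hΨmd χ (hpMax.2 (Or.inl hχ))
    have hub : (Fml.dia φ).mdepth ≤ mdepthSet p.pos :=
      le_csSup hbdd ⟨Fml.dia φ, hφ, rfl⟩
    have hne : (Fml.mdepth '' {χ | χ ∈ clSet (Set.univ : Set Cst) Φ ∧ Der φ χ}).Nonempty :=
      ⟨φ.mdepth, φ, ⟨hφΨ, Der.refl φ⟩, rfl⟩
    have hle : mdepthSet {χ | χ ∈ clSet (Set.univ : Set Cst) Φ ∧ Der φ χ} ≤ φ.mdepth := by
      refine csSup_le hne ?_
      rintro a ⟨χ, hχ, rfl⟩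
      exact mdepth_der hχ.2
    have : φ.mdepth < (Fml.dia φ).mdepth := Nat.lt_succ_self _
    exact lt_of_le_of_lt hle (lt_of_lt_of_le this hub)

end QRC1
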